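/- arXiv:2407.19974 — 2 statements merged into one kernel-verified Lean document; each statement's English description precedes it below -/
import Mathlib

section
/- Let n ≥ 1, let m ≥ 2 be even, let K be a totally real algebraic extension of ℚ, let O be an order in K, let f ∈ K[x₁,…,xₙ] be a totally positive definite homogeneous polynomial of degree m, let Λ ⊆ Kⁿ be a finitely generated O-submodule with f(v) ∈ O for all v ∈ Λ, and let α ∈ O^+. If O^+ has the Northcott property, then the set {v ∈ Λ : f(v) = α} is finite. -/
open MvPolynomial

/-- The house of an algebraic number `α`: the maximum of `|σ(α)|` over the
embeddings `σ` into `ℂ`. -/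
noncomputable def house' {K : Type*} [Field K] (α : K) : ℝ :=
  ⨆ σ : K →+* ℂ, ‖σ α‖

/-- A set `S` of elements of a field of algebraic numbers has the Northcott
property (with respect to the house) if for every real `c > 0` the set of
elements of `S` of house less than `c` is finite. -/
def HasNorthcott {K : Type*} [Field K] (S : Set K) : Prop :=
  ∀ c : ℝ, 0 < c → {α : K | α ∈ S ∧ house' α < c}.Finite

section Aux

variable {K : Type*} [Field K]

/-- Realification of an embedding with real image. -/
noncomputable def reEmb (σ : K →+* ℂ) (h : ∀ x, (σ x).im = 0) : K →+* ℝ where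
  toFun x := (σ x).re
  map_one' := by simp
  map_mul' x y := by simp [Complex.mul_re, h x]
  map_zero' := by simp
  map_add' x y := by simp

lemma reEmb_abs (σ : K →+* ℂ) (h : ∀ x, (σ x).im = 0) (x : K) :
    ‖σ x‖ = |reEmb σ h x| := by
  have hx : σ x = (((σ x).re : ℝ) : ℂ) := Complex.ext rfl (by simp [h x])
  rw [hx, Complex.norm_real, Real.norm_eq_abs]
  rfl

variable [CharZero K] [Algebra.IsAlgebraic ℚ K]

lemma conj_mem_rootSet (γ : K) (σ : K →+* ℂ) :
    σ γ ∈ (minpoly ℚ γ).rootSet ℂ := by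
  have hγ : IsIntegral ℚ γ := (Algebra.IsAlgebraic.isAlgebraic (R := ℚ) γ).isIntegral
  have hne : minpoly ℚ γ ≠ 0 := minpoly.ne_zero hγ
  rw [Polynomial.mem_rootSet]
  refine ⟨hne, ?_⟩
  have h0 : Polynomial.aeval γ (minpoly ℚ γ) = 0 := minpoly.aeval ℚ γ
  have h2 : σ.toRatAlgHom (Polynomial.aeval γ (minpoly ℚ γ)) = 0 := by rw [h0, map_zero]
  rw [← Polynomial.aeval_algHom_apply] at h2
  exact h2

lemma exists_conj_bound (γ : K) :
    ∃ A : ℝ, 0 ≤ A ∧ ∀ σ : K →+* ℂ, ‖σ γ‖ ≤ A := by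
  have hfin : ((minpoly ℚ γ).rootSet ℂ).Finite := (minpoly ℚ γ).rootSet_finite ℂ
  obtain ⟨A0, hA0⟩ := (hfin.image (‖·‖)).bddAbove
  refine ⟨max A0 0, le_max_right _ _, fun σ => ?_⟩
  exact le_trans (hA0 ⟨σ γ, conj_mem_rootSet γ σ, rfl⟩) (le_max_left _ _)

lemma le_house'_of_emb (γ : K) (σ : K →+* ℂ) : ‖σ γ‖ ≤ house' γ := by
  obtain ⟨A, _, hA⟩ := exists_conj_bound γ
  show ‖σ γ‖ ≤ ⨆ σ' : K →+* ℂ, ‖σ' γ‖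
  refine le_ciSup (f := fun σ' : K →+* ℂ => ‖σ' γ‖) ⟨A, ?_⟩ σ
  rintro y ⟨σ', rfl⟩
  exact hA σ'

end Aux

lemma homog_eval_smul {R : Type*} [CommSemiring R] {n mm : ℕ}
    {p : MvPolynomial (Fin n) R} (hp : p.IsHomogeneous mm) (c : R) (x : Fin n → R) :
    eval (c • x) p = c ^ mm * eval x p := by
  rw [eval_eq', eval_eq', Finset.mul_sum]
  refine Finset.sum_congr rfl fun d hd => ?_
  have hdeg : ∑ i, d i = mm := by
    have h1 : (Finsupp.weight 1) d = mm := hp (mem_support_iff.mp hd)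
    rw [show (Finsupp.weight 1 : (Fin n →₀ ℕ) →+ ℕ) = Finsupp.weight (fun _ => 1) from rfl,
      ← Finsupp.degree_eq_weight_one] at h1
    rw [← h1, Finsupp.degree]
    exact (Finset.sum_subset (Finset.subset_univ _)
      fun i _ hi => Finsupp.notMem_support_iff.mp hi).symm
  have h2 : ∀ i : Fin n, (c • x) i ^ d i = c ^ d i * x i ^ d i := by
    intro i; simp [mul_pow]
  calc coeff d p * ∏ i, (c • x) i ^ d i
      = coeff d p * ((∏ i, c ^ d i) * ∏ i, x i ^ d i) := by
        rw [← Finset.prod_mul_distrib]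
        exact congrArg _ (Finset.prod_congr rfl fun i _ => h2 i)
    _ = c ^ mm * (coeff d p * ∏ i, x i ^ d i) := by
        rw [Finset.prod_pow_eq_pow_sum, hdeg]; ring

lemma homog_map {R S σ' : Type*} [CommSemiring R] [CommSemiring S] (g : R →+* S)
    {p : MvPolynomial σ' R} {mm : ℕ} (hp : p.IsHomogeneous mm) :
    (map g p).IsHomogeneous mm := by
  intro d hd
  exact hp fun h => hd (by rw [coeff_map, h, map_zero])

lemma ringHom_eval_comm {R S σ' : Type*} [CommSemiring R] [CommSemiring S]
    (g : R →+* S) (x : σ' → R) (p : MvPolynomial σ' R) :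
    g (eval x p) = eval (fun i => g (x i)) (map g p) := by
  have h := MvPolynomial.eval₂_comp_left g (RingHom.id R) x p
  rw [MvPolynomial.eval₂_id, RingHom.comp_id, MvPolynomial.eval₂_eq_eval_map] at h
  exact h

lemma posdef_bound {n mm : ℕ} (hn : 1 ≤ n) {p : MvPolynomial (Fin n) ℝ}
    (hp : p.IsHomogeneous mm)
    (hpos : ∀ x : Fin n → ℝ, x ≠ 0 → 0 < eval x p) :
    ∃ δ : ℝ, 0 < δ ∧ ∀ x : Fin n → ℝ, x ≠ 0 → δ * ‖x‖ ^ mm ≤ eval x p := by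
  haveI : Nonempty (Fin n) := ⟨⟨0, hn⟩⟩
  have hcont : Continuous fun x : Fin n → ℝ => eval x p := MvPolynomial.continuous_eval p
  have hcomp : IsCompact (Metric.sphere (0 : Fin n → ℝ) 1) := isCompact_sphere _ _
  have hone : (fun _ : Fin n => (1 : ℝ)) ∈ Metric.sphere (0 : Fin n → ℝ) 1 := by
    simp [Metric.mem_sphere, dist_zero_right]
  obtain ⟨u, hu, hmin⟩ := hcomp.exists_isMinOn ⟨_, hone⟩ hcont.continuousOn
  have hu0 : u ≠ 0 := by
    intro h
    rw [Metric.mem_sphere, h] at hu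
    simp at hu
  refine ⟨eval u p, hpos u hu0, fun x hx => ?_⟩
  have hxn : 0 < ‖x‖ := norm_pos_iff.mpr hx
  have hux : ‖x‖⁻¹ • x ∈ Metric.sphere (0 : Fin n → ℝ) 1 := by
    simp [Metric.mem_sphere, dist_zero_right, norm_smul,
      abs_of_pos (inv_pos.mpr hxn), inv_mul_cancel₀ hxn.ne']
  have h1 : eval u p ≤ eval (‖x‖⁻¹ • x) p := hmin hux
  have h2 : eval x p = ‖x‖ ^ mm * eval (‖x‖⁻¹ • x) p := by
    have h3 := homog_eval_smul hp ‖x‖ (‖x‖⁻¹ • x)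
    rw [smul_smul, mul_inv_cancel₀ hxn.ne', one_smul] at h3
    exact h3
  rw [h2]
  have h4 := mul_le_mul_of_nonneg_left h1 (pow_nonneg hxn.le mm)
  linarith

theorem finitely_many_representations_of_northcott
    (n m : ℕ) (hn : 1 ≤ n) (hm : 2 ≤ m) (hme : Even m)
    -- K is a totally real algebraic extension of ℚ
    (K : Type*) [Field K] [CharZero K] [Algebra.IsAlgebraic ℚ K]
    (hK : ∀ σ : K →+* ℂ, ∀ x : K, (σ x).im = 0)
    -- O is an order in K
    (O : Subalgebra ℤ K)
    (hOint : ∀ x ∈ O, IsIntegral ℤ x)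
    (hOfrac : ∀ x : K, ∃ a ∈ O, ∃ b ∈ O, b ≠ 0 ∧ x = a / b)
    (f : MvPolynomial (Fin n) K) (hf : f.IsHomogeneous m)
    -- f is totally positive definite
    (hpd : ∀ σ : K →+* ℝ, ∀ x : Fin n → ℝ, x ≠ 0 → 0 < eval x (map σ f))
    (Λ : Submodule O (Fin n → K)) (hΛ : Λ.FG)
    -- f takes values in O on Λ
    (hfΛ : ∀ v ∈ Λ, eval v f ∈ O)
    (α : K) (hαO : α ∈ O)
    -- α is totally positive
    (hαpos : ∀ σ : K →+* ℂ, 0 < (σ α).re)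
    -- O⁺ has the Northcott property
    (hNorthcott : HasNorthcott {x : K | x ∈ O ∧ ∀ σ : K →+* ℂ, 0 < (σ x).re}) :
    {v : Fin n → K | v ∈ Λ ∧ eval v f = α}.Finite := by
  classical
  -- squares have finite fibers
  have hsq : ∀ c : K, {β : K | β ^ 2 = c}.Finite := by
    intro c
    rcases Set.eq_empty_or_nonempty {β : K | β ^ 2 = c} with h | ⟨β₀, hβ₀⟩
    · rw [h]; exact Set.finite_empty
    · refine Set.Finite.subset ((Set.finite_singleton (-β₀)).insert β₀) ?_
      intro β hβ
      have : β ^ 2 = β₀ ^ 2 := by rw [hβ, hβ₀]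
      rcases sq_eq_sq_iff_eq_or_eq_neg.mp this with h | h
      · exact Set.mem_insert_iff.mpr (Or.inl h)
      · exact Set.mem_insert_iff.mpr (Or.inr (by simp [h]))
  -- Northcott for all of O
  have hO_north : ∀ B : ℝ, 0 < B → {β : K | β ∈ O ∧ house' β < B}.Finite := by
    intro B hB
    have hΨ := hNorthcott (B ^ 2 + 2) (by positivity)
    refine Set.Finite.subset (Set.Finite.biUnion hΨ (fun γ _ => hsq (γ - 1))) ?_
    rintro β ⟨hβO, hβh⟩
    have hβb : ∀ σ : K →+* ℂ, ‖σ β‖ ≤ house' β := fun σ => le_house'_of_emb β σ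
    have hmem : β ^ 2 + 1 ∈ {α_1 : K |
        α_1 ∈ {x : K | x ∈ O ∧ ∀ σ : K →+* ℂ, 0 < (σ x).re} ∧ house' α_1 < B ^ 2 + 2} := by
      refine ⟨⟨add_mem (pow_mem hβO 2) (one_mem O), fun σ => ?_⟩, ?_⟩
      · rw [map_add, map_pow, map_one]
        have him := hK σ β
        rw [Complex.add_re, Complex.one_re, sq, Complex.mul_re, him]
        nlinarith [sq_nonneg (σ β).re]
      · have hle : ∀ σ : K →+* ℂ, ‖σ (β ^ 2 + 1)‖ ≤ B ^ 2 + 1 := by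
          intro σ
          rw [map_add, map_pow, map_one]
          calc ‖(σ β) ^ 2 + 1‖
              ≤ ‖(σ β) ^ 2‖ + ‖(1:ℂ)‖ := norm_add_le _ _
            _ = ‖σ β‖ ^ 2 + 1 := by rw [norm_pow, norm_one]
            _ ≤ B ^ 2 + 1 := by
                have h1 := hβb σ
                have h2 : ‖σ β‖ ≤ B := le_trans h1 hβh.le
                nlinarith [norm_nonneg (σ β)]
        have := Real.iSup_le hle (by positivity)
        calc house' (β ^ 2 + 1) ≤ B ^ 2 + 1 := this
          _ < B ^ 2 + 2 := by linarith
    refine Set.mem_biUnion hmem ?_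
    show β ^ 2 = (β ^ 2 + 1) - 1
    ring
  -- realification of embeddings
  set ρ : (K →+* ℂ) → (K →+* ℝ) := fun σ => reEmb σ (hK σ) with hρ
  -- uniform bound on the conjugates of the coordinates of representing vectors
  obtain ⟨C, hC0, hCb⟩ : ∃ C : ℝ, 0 < C ∧ ∀ v : Fin n → K, v ∈ Λ → eval v f = α →
      ∀ (j : Fin n) (σ : K →+* ℂ), ‖σ (v j)‖ ≤ C := by
    rcases isEmpty_or_nonempty (K →+* ℂ) with hE | hNE
    · exact ⟨1, one_pos, fun v _ _ j σ => (hE.false σ).elim⟩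
    obtain ⟨A, hA0, hA⟩ := exists_conj_bound (K := K) α
    -- the image polynomials form a finite set
    have hmapeq : ∀ σ : K →+* ℂ, map (ρ σ) f
        = ∑ s ∈ f.support.attach, monomial s.1 ((ρ σ) (coeff s.1 f)) := by
      intro σ
      conv_lhs => rw [f.as_sum]
      rw [map_sum, Finset.sum_attach f.support (fun s => monomial s ((ρ σ) (coeff s f)))]
      exact Finset.sum_congr rfl fun s _ => map_monomial _ _ _
    have hval : ∀ c : K, (Set.range fun σ : K →+* ℂ => (ρ σ) c).Finite := by
      intro c
      refine Set.Finite.subset (((minpoly ℚ c).rootSet_finite ℂ).image Complex.re) ?_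
      rintro _ ⟨σ, rfl⟩
      exact ⟨σ c, conj_mem_rootSet c σ, rfl⟩
    have hPfin : (Set.range fun σ : K →+* ℂ => map (ρ σ) f).Finite := by
      have h1 : (Set.range fun σ : K →+* ℂ =>
          (fun s : {s // s ∈ f.support} => (ρ σ) (coeff s.1 f))).Finite := by
        refine Set.Finite.subset (Set.Finite.pi fun s : {s // s ∈ f.support} =>
          hval (coeff s.1 f)) ?_
        rintro _ ⟨σ, rfl⟩
        exact fun s _ => ⟨σ, rfl⟩
      have hfun : (fun σ : K →+* ℂ => map (ρ σ) f)
          = (fun g : {s // s ∈ f.support} → ℝ =>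
              ∑ s ∈ f.support.attach, (monomial s.1 (g s) : MvPolynomial (Fin n) ℝ))
            ∘ (fun σ : K →+* ℂ => fun s : {s // s ∈ f.support} => (ρ σ) (coeff s.1 f)) := by
        funext σ
        exact hmapeq σ
      rw [hfun, Set.range_comp]
      exact h1.image _
    have hδex : ∀ p : MvPolynomial (Fin n) ℝ,
        p ∈ Set.range (fun σ : K →+* ℂ => map (ρ σ) f) →
        ∃ δ : ℝ, 0 < δ ∧ ∀ x : Fin n → ℝ, x ≠ 0 → δ * ‖x‖ ^ m ≤ eval x p := by
      rintro _ ⟨σ, rfl⟩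
      exact posdef_bound hn (homog_map (ρ σ) hf) (hpd (ρ σ))
    choose! δfun hδ1 hδ2 using hδex
    have hPne : hPfin.toFinset.Nonempty := by
      rw [Set.Finite.toFinset_nonempty]
      exact Set.range_nonempty _
    set δ : ℝ := hPfin.toFinset.inf' hPne δfun with hδdef
    have hδpos : 0 < δ := by
      rw [hδdef, Finset.lt_inf'_iff]
      intro p hp
      exact hδ1 p (hPfin.mem_toFinset.mp hp)
    have hδle : ∀ σ : K →+* ℂ, ∀ x : Fin n → ℝ, x ≠ 0 →
        δ * ‖x‖ ^ m ≤ eval x (map (ρ σ) f) := by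
      intro σ x hx
      have hp : map (ρ σ) f ∈ hPfin.toFinset := hPfin.mem_toFinset.mpr ⟨σ, rfl⟩
      have h1 : δ ≤ δfun (map (ρ σ) f) := Finset.inf'_le _ hp
      calc δ * ‖x‖ ^ m ≤ δfun (map (ρ σ) f) * ‖x‖ ^ m := by
            exact mul_le_mul_of_nonneg_right h1 (by positivity)
        _ ≤ eval x (map (ρ σ) f) := hδ2 _ ⟨σ, rfl⟩ x hx
    refine ⟨max 1 (A / δ), lt_of_lt_of_le one_pos (le_max_left _ _), ?_⟩
    intro v hvΛ hvf j σ
    rw [reEmb_abs σ (hK σ)]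
    set x : Fin n → ℝ := fun i => (ρ σ) (v i) with hxdef
    have hxj : reEmb σ (hK σ) (v j) = x j := rfl
    rw [hxj]
    rcases le_or_gt |x j| 1 with h | h
    · exact le_trans h (le_max_left _ _)
    refine le_trans ?_ (le_max_right _ _)
    have hx0 : x ≠ 0 := by
      intro h0
      rw [h0] at h
      simp at h
      linarith
    have h2 : eval x (map (ρ σ) f) = (ρ σ) α := by
      rw [← hvf]
      exact (ringHom_eval_comm (ρ σ) v f).symm
    have h3 : (ρ σ) α ≤ A := by
      refine le_trans (le_abs_self _) ?_
      rw [← reEmb_abs σ (hK σ)]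
      exact hA σ
    have h4 : |x j| ≤ ‖x‖ := by
      rw [← Real.norm_eq_abs]
      exact norm_le_pi_norm x j
    have h5 : |x j| ≤ |x j| ^ m := le_self_pow₀ h.le (by omega)
    have h6 : δ * ‖x‖ ^ m ≤ eval x (map (ρ σ) f) := hδle σ x hx0
    have h7 : |x j| ^ m ≤ ‖x‖ ^ m := pow_le_pow_left₀ (abs_nonneg _) h4 m
    have h8 : δ * |x j| ≤ A := by
      calc δ * |x j| ≤ δ * |x j| ^ m := mul_le_mul_of_nonneg_left h5 hδpos.le
        _ ≤ δ * ‖x‖ ^ m := mul_le_mul_of_nonneg_left h7 hδpos.le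
        _ ≤ eval x (map (ρ σ) f) := h6
        _ = (ρ σ) α := h2
        _ ≤ A := h3
    rw [le_div_iff₀ hδpos]
    linarith
  -- the common denominator
  obtain ⟨T, hT⟩ := hΛ
  obtain ⟨d, hdO, hdne, hdT⟩ : ∃ d : K, d ∈ O ∧ d ≠ 0 ∧
      ∀ w ∈ T, ∀ j : Fin n, d * w j ∈ O := by
    choose aa haa bb hbb hbbne hxab using hOfrac
    refine ⟨∏ q ∈ T ×ˢ (Finset.univ : Finset (Fin n)), bb (q.1 q.2),
      prod_mem fun q _ => hbb _, Finset.prod_ne_zero_iff.mpr fun q _ => hbbne _, ?_⟩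
    intro w hw j
    have hq : (w, j) ∈ T ×ˢ (Finset.univ : Finset (Fin n)) :=
      Finset.mem_product.mpr ⟨hw, Finset.mem_univ _⟩
    have hsplit : (∏ q ∈ T ×ˢ (Finset.univ : Finset (Fin n)), bb (q.1 q.2))
        = bb (w j) * ∏ q ∈ (T ×ˢ (Finset.univ : Finset (Fin n))).erase (w, j), bb (q.1 q.2) :=
      (Finset.mul_prod_erase _ _ hq).symm
    have hb : bb (w j) * w j = aa (w j) := by
      have h := hxab (w j)
      rw [eq_div_iff (hbbne (w j))] at h
      rw [mul_comm]
      exact h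
    have h2 : (bb (w j) * ∏ q ∈ (T ×ˢ (Finset.univ : Finset (Fin n))).erase (w, j),
          bb (q.1 q.2)) * w j
        = (∏ q ∈ (T ×ˢ (Finset.univ : Finset (Fin n))).erase (w, j), bb (q.1 q.2))
          * (bb (w j) * w j) := by ring
    rw [hsplit, h2, hb]
    exact mul_mem (prod_mem fun q _ => hbb _) (haa _)
  -- d clears denominators of all coordinates of Λ
  have hdv : ∀ v ∈ Λ, ∀ j : Fin n, d * v j ∈ O := by
    intro v hv
    rw [← hT] at hv
    induction hv using Submodule.span_induction with
    | mem x hx => exact fun j => hdT x hx j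
    | zero => intro j; simpa using zero_mem O
    | add x y hx hy ihx ihy =>
        intro j
        have := add_mem (ihx j) (ihy j)
        simpa [mul_add] using this
    | smul a x hx ih =>
        intro j
        have hax : (a • x) j = (a : K) * x j := by
          rw [Pi.smul_apply, Subalgebra.smul_def, smul_eq_mul]
        rw [hax, mul_left_comm]
        exact mul_mem a.2 (ih j)
  -- bound for conjugates of d
  obtain ⟨D, hD0, hD⟩ := exists_conj_bound (K := K) d
  set B : ℝ := D * C + 1 with hB
  have hBpos : 0 < B := by
    have : 0 ≤ D * C := mul_nonneg hD0 hC0.le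
    rw [hB]; linarith
  have hΦ : {β : K | β ∈ O ∧ house' β < B}.Finite := hO_north B hBpos
  have hE : ((fun y : K => d⁻¹ * y) '' {β : K | β ∈ O ∧ house' β < B}).Finite := hΦ.image _
  refine Set.Finite.subset (Set.Finite.pi fun _ : Fin n => hE) ?_
  rintro v ⟨hvΛ, hvf⟩
  rw [Set.mem_univ_pi]
  intro j
  refine ⟨d * v j, ⟨hdv v hvΛ j, ?_⟩, by
    show d⁻¹ * (d * v j) = v j
    rw [inv_mul_cancel_left₀ hdne]⟩
  have hper : ∀ σ : K →+* ℂ, ‖σ (d * v j)‖ ≤ D * C := by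
    intro σ
    rw [map_mul, norm_mul]
    exact mul_le_mul (hD σ) (hCb v hvΛ hvf j σ) (norm_nonneg _) hD0
  calc house' (d * v j) ≤ D * C := Real.iSup_le hper (mul_nonneg hD0 hC0.le)
    _ < B := by rw [hB]; linarith
end

section
/- Let m ≥ 2 be even, let K be a totally real algebraic extension of ℚ with [K:ℚ] infinite, let δ ∈ O_K^+ be a totally positive algebraic integer of K, and let O be an order in K. Suppose there exist an integer n ≥ 1, a finitely generated O-submodule Λ ⊆ Kⁿ, and a totally positive definite homogeneous polynomial f ∈ K[x₁,…,xₙ] of degree m with f(v) ∈ O_K for all v ∈ Λ, such that for every α ∈ O^+ there exists v ∈ Λ with f(v) = δ·α. Then O^+ does not have the Northcott property. -/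
open MvPolynomial

set_option linter.unusedSectionVars false

section House
variable {K : Type*} [Field K] [CharZero K] [Algebra.IsAlgebraic ℚ K]

lemma mem_rootSet_minpoly' {A : Type*} [Field A] [CharZero A] (σ : K →+* A) (x : K) :
    σ x ∈ (minpoly ℚ x).rootSet A := by
  have hx : IsIntegral ℚ x := (Algebra.IsAlgebraic.isAlgebraic x).isIntegral
  rw [Polynomial.mem_rootSet]
  refine ⟨minpoly.ne_zero hx, ?_⟩
  have h1 : (Polynomial.aeval (σ x)) (minpoly ℚ x) = σ ((Polynomial.aeval x) (minpoly ℚ x)) := by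
    rw [Polynomial.aeval_def, Polynomial.aeval_def, Polynomial.hom_eval₂]
    congr 1
    exact Subsingleton.elim _ _
  rw [h1, minpoly.aeval, map_zero]

lemma bddAbove_house (x : K) :
    BddAbove (Set.range fun σ : K →+* ℂ => ‖σ x‖) := by
  refine BddAbove.mono ?_ ((((minpoly ℚ x).rootSet_finite ℂ).image (fun z : ℂ => ‖z‖)).bddAbove)
  rintro _ ⟨σ, rfl⟩
  exact ⟨σ x, mem_rootSet_minpoly' σ x, rfl⟩

lemma le_house' (σ : K →+* ℂ) (x : K) : ‖σ x‖ ≤ house' x :=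
  le_ciSup (bddAbove_house x) σ

lemma house'_le [Nonempty (K →+* ℂ)] {x : K} {B : ℝ}
    (h : ∀ σ : K →+* ℂ, ‖σ x‖ ≤ B) : house' x ≤ B := ciSup_le h

lemma house'_nonneg [Nonempty (K →+* ℂ)] (x : K) : 0 ≤ house' x := by
  obtain ⟨σ⟩ := (inferInstance : Nonempty (K →+* ℂ))
  exact le_trans (norm_nonneg _) (le_house' σ x)

end House

lemma eval_smul_of_isHomogeneous {n m : ℕ} {p : MvPolynomial (Fin n) ℝ} (hp : p.IsHomogeneous m)
    (c : ℝ) (x : Fin n → ℝ) : eval (c • x) p = c ^ m * eval x p := by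
  rw [eval_eq, eval_eq, Finset.mul_sum]
  refine Finset.sum_congr rfl fun d hd => ?_
  have hdeg : ∑ i ∈ d.support, d i = m := by
    have h := hp (MvPolynomial.mem_support_iff.mp hd)
    change (Finsupp.weight (fun _ => (1 : ℕ))) d = m at h; rw [← Finsupp.degree_eq_weight_one] at h
    exact h
  calc MvPolynomial.coeff d p * ∏ i ∈ d.support, (c • x) i ^ d i
      = MvPolynomial.coeff d p * ∏ i ∈ d.support, (c ^ d i * x i ^ d i) := by
        congr 1; exact Finset.prod_congr rfl fun i _ => by simp [mul_pow]
    _ = MvPolynomial.coeff d p * ((∏ i ∈ d.support, c ^ d i) * ∏ i ∈ d.support, x i ^ d i) := by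
        rw [Finset.prod_mul_distrib]
    _ = c ^ m * (MvPolynomial.coeff d p * ∏ i ∈ d.support, x i ^ d i) := by
        rw [Finset.prod_pow_eq_pow_sum, hdeg]; ring

lemma finite_range_map {K : Type*} [Field K] [CharZero K] [Algebra.IsAlgebraic ℚ K]
    {n : ℕ} (f : MvPolynomial (Fin n) K) :
    (Set.range fun σ : K →+* ℝ => map σ f).Finite := by
  have hsub : (Set.range fun σ : K →+* ℝ => map σ f) ⊆
      (fun t : {d // d ∈ f.support} → ℝ =>
        ∑ dd ∈ f.support.attach, monomial dd.1 (t dd)) ''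
        (Set.univ.pi fun dd : {d // d ∈ f.support} =>
          (minpoly ℚ (MvPolynomial.coeff dd.1 f)).rootSet ℝ) := by
    rintro _ ⟨σ, rfl⟩
    refine ⟨fun dd => σ (MvPolynomial.coeff dd.1 f),
      fun dd _ => mem_rootSet_minpoly' σ _, ?_⟩
    show ∑ dd ∈ f.support.attach, monomial dd.1 (σ (MvPolynomial.coeff dd.1 f)) = map σ f
    rw [Finset.sum_attach f.support (fun d => monomial d (σ (MvPolynomial.coeff d f)))]
    conv_rhs => rw [← f.support_sum_monomial_coeff]
    rw [map_sum]
    exact Finset.sum_congr rfl fun dd _ => by rw [map_monomial]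
  refine Set.Finite.subset (Set.Finite.image _ ?_) hsub
  exact Set.Finite.pi fun dd => (minpoly ℚ _).rootSet_finite ℝ

lemma exists_uniform_coercive {K : Type*} [Field K] [CharZero K] [Algebra.IsAlgebraic ℚ K]
    {n m : ℕ} (hn : 1 ≤ n) (hm : 2 ≤ m) (f : MvPolynomial (Fin n) K)
    (hhom : f.IsHomogeneous m)
    (hpos : ∀ σ : K →+* ℝ, ∀ x : Fin n → ℝ, x ≠ 0 → 0 < eval x (map σ f))
    (τ₀ : K →+* ℝ) :
    ∃ lam : ℝ, 0 < lam ∧ ∀ (σ : K →+* ℝ) (x : Fin n → ℝ), lam * ‖x‖ ^ m ≤ eval x (map σ f) := by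
  have hne : Nonempty (Fin n) := ⟨⟨0, Nat.lt_of_lt_of_le Nat.zero_lt_one hn⟩⟩
  have hPfin := finite_range_map f
  have hsphne : (Metric.sphere (0 : Fin n → ℝ) 1).Nonempty :=
    NormedSpace.sphere_nonempty.mpr zero_le_one
  have key : ∀ p ∈ hPfin.toFinset, ∃ lam, 0 < lam ∧
      ∀ x ∈ Metric.sphere (0 : Fin n → ℝ) 1, lam ≤ eval x p := by
    intro p hp
    rw [Set.Finite.mem_toFinset] at hp
    obtain ⟨σ, rfl⟩ := hp
    obtain ⟨x₀, hx₀mem, hmin⟩ := (isCompact_sphere (0 : Fin n → ℝ) 1).exists_isMinOn hsphne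
      (MvPolynomial.continuous_eval _).continuousOn
    refine ⟨_, hpos σ x₀ ?_, fun x hx => hmin hx⟩
    intro h0
    rw [h0] at hx₀mem
    simp at hx₀mem
  choose lamf hlam0 hlamle using key
  have hPne : hPfin.toFinset.Nonempty :=
    ⟨map τ₀ f, by rw [Set.Finite.mem_toFinset]; exact ⟨τ₀, rfl⟩⟩
  have hPane : hPfin.toFinset.attach.Nonempty := Finset.attach_nonempty_iff.mpr hPne
  set lam := hPfin.toFinset.attach.inf' hPane (fun p => lamf p.1 p.2) with hlamdef
  have hlampos : 0 < lam := by
    rw [hlamdef, Finset.lt_inf'_iff]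
    exact fun p _ => hlam0 p.1 p.2
  refine ⟨lam, hlampos, ?_⟩
  intro σ x
  have hmemP : map σ f ∈ hPfin.toFinset := by
    rw [Set.Finite.mem_toFinset]; exact ⟨σ, rfl⟩
  have hlam_le : ∀ y ∈ Metric.sphere (0 : Fin n → ℝ) 1, lam ≤ eval y (map σ f) := by
    intro y hy
    exact le_trans (Finset.inf'_le _ (Finset.mem_attach _ ⟨_, hmemP⟩)) (hlamle _ _ y hy)
  rcases eq_or_ne x 0 with rfl | hx
  · have h0 : (0 : Fin n → ℝ) = (0:ℝ) • (0 : Fin n → ℝ) := by simp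
    rw [h0, eval_smul_of_isHomogeneous (hhom.map σ)]
    simp [zero_pow (show m ≠ 0 by omega)]
  · have hxn : ‖x‖ ≠ 0 := norm_ne_zero_iff.mpr hx
    set y := ‖x‖⁻¹ • x with hy
    have hymem : y ∈ Metric.sphere (0 : Fin n → ℝ) 1 := by
      rw [mem_sphere_zero_iff_norm, hy, norm_smul]
      rw [norm_inv, norm_norm, inv_mul_cancel₀ hxn]
    have hxy : x = ‖x‖ • y := by rw [hy, smul_smul, mul_inv_cancel₀ hxn, one_smul]
    have h5 : eval x (map σ f) = ‖x‖ ^ m * eval y (map σ f) := by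
      conv_lhs => rw [hxy]
      exact eval_smul_of_isHomogeneous (hhom.map σ) _ _
    rw [h5]
    exact mul_le_mul_of_nonneg_right (hlam_le y hymem) (by positivity) |>.trans_eq (by ring)

set_option maxHeartbeats 2000000 in
theorem no_northcott_of_represents_multiples
    (m : ℕ) (hm : 2 ≤ m) (hme : Even m)
    -- K is a totally real algebraic extension of ℚ of infinite degree
    (K : Type*) [Field K] [CharZero K] [Algebra.IsAlgebraic ℚ K]
    (hK : ∀ σ : K →+* ℂ, ∀ x : K, (σ x).im = 0)
    (hKinf : ¬ FiniteDimensional ℚ K)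
    -- δ is a totally positive algebraic integer of K
    (δ : K) (hδint : IsIntegral ℤ δ) (hδpos : ∀ σ : K →+* ℂ, 0 < (σ δ).re)
    -- O is an order in K
    (O : Subalgebra ℤ K)
    (hOint : ∀ x ∈ O, IsIntegral ℤ x)
    (hOfrac : ∀ x : K, ∃ a ∈ O, ∃ b ∈ O, b ≠ 0 ∧ x = a / b)
    -- there is an m-ic O-lattice representing all of δ·O⁺
    (hrep : ∃ (n : ℕ) (_ : 1 ≤ n) (Λ : Submodule O (Fin n → K))
        (f : MvPolynomial (Fin n) K),
        Λ.FG ∧ f.IsHomogeneous m ∧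
        (∀ σ : K →+* ℝ, ∀ x : Fin n → ℝ, x ≠ 0 → 0 < eval x (map σ f)) ∧
        (∀ v ∈ Λ, IsIntegral ℤ (eval v f)) ∧
        ∀ α : K, α ∈ O → (∀ σ : K →+* ℂ, 0 < (σ α).re) →
          ∃ v ∈ Λ, eval v f = δ * α) :
    -- then O⁺ does not have the Northcott property
    ¬ HasNorthcott {x : K | x ∈ O ∧ ∀ σ : K →+* ℂ, 0 < (σ x).re} := by
  classical
  intro hNor
  obtain ⟨n, hn, Λ, f, hFG, hhom, hpos, hint, huniv⟩ := hrep
  obtain ⟨σ₀⟩ : Nonempty (K →+* ℂ) := ⟨(IsAlgClosed.lift : K →ₐ[ℚ] ℂ).toRingHom⟩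
  haveI hembne : Nonempty (K →+* ℂ) := ⟨σ₀⟩
  -- real forms of the complex embeddings
  have hmulre : ∀ (σ : K →+* ℂ) (x y : K), (σ (x * y)).re = (σ x).re * (σ y).re := by
    intro σ x y
    rw [map_mul, Complex.mul_re, hK σ x, hK σ y]
    ring
  let RE : (K →+* ℂ) → (K →+* ℝ) := fun σ =>
    { toFun := fun x => (σ x).re
      map_one' := by simp
      map_mul' := fun x y => hmulre σ x y
      map_zero' := by simp
      map_add' := fun x y => by simp }
  have hRE : ∀ (σ : K →+* ℂ) (x : K), σ x = ((RE σ) x : ℂ) := by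
    intro σ x
    apply Complex.ext
    · rfl
    · simp [RE, hK σ x]
  have hREabs : ∀ (σ : K →+* ℂ) (x : K), ‖σ x‖ = |RE σ x| := by
    intro σ x
    rw [hRE σ x, Complex.norm_real, Real.norm_eq_abs]
  have habs_le : ∀ (τ : K →+* ℝ) (x : K), |τ x| ≤ house' x := by
    intro τ x
    have h := le_house' (Complex.ofRealHom.comp τ) x
    simpa [Complex.norm_real] using h
  have hδ0 : δ ≠ 0 := by
    intro h
    have h2 := hδpos σ₀
    rw [h, map_zero] at h2
    simp at h2
  -- a common denominator for the lattice
  have hden1 : ∀ x : K, ∃ b, b ∈ O ∧ b ≠ 0 ∧ b * x ∈ O := by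
    intro x
    obtain ⟨a, ha, b, hb, hb0, rfl⟩ := hOfrac x
    refine ⟨b, hb, hb0, ?_⟩
    have h : b * (a / b) = a := by field_simp
    rw [h]; exact ha
  have hden : ∀ t : Finset K, ∃ b, b ∈ O ∧ b ≠ 0 ∧ ∀ x ∈ t, b * x ∈ O := by
    intro t
    induction t using Finset.induction_on with
    | empty => exact ⟨1, one_mem O, one_ne_zero, by simp⟩
    | @insert a t ha ih =>
      obtain ⟨b, hbO, hb0, hb⟩ := ih
      obtain ⟨c, hcO, hc0, hc⟩ := hden1 a
      refine ⟨c * b, mul_mem hcO hbO, mul_ne_zero hc0 hb0, ?_⟩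
      intro x hx
      rcases Finset.mem_insert.mp hx with rfl | hx
      · have h : c * b * x = b * (c * x) := by ring
        rw [h]; exact mul_mem hbO hc
      · have h : c * b * x = c * (b * x) := by ring
        rw [h]; exact mul_mem hcO (hb x hx)
  obtain ⟨s, hs⟩ := hFG
  obtain ⟨d, hdO, hd0, hdG⟩ := hden (s.biUnion fun w => Finset.image w Finset.univ)
  have hdΛ : ∀ v ∈ Λ, ∀ j, d * v j ∈ O := by
    intro v hv
    rw [← hs] at hv
    induction hv using Submodule.span_induction with
    | mem w hw =>
      intro j
      exact hdG (w j) (Finset.mem_biUnion.mpr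
        ⟨w, hw, Finset.mem_image.mpr ⟨j, Finset.mem_univ j, rfl⟩⟩)
    | zero =>
      intro j
      simpa using zero_mem O
    | add v w hv hw ihv ihw =>
      intro j
      have h : d * (v + w) j = d * v j + d * w j := by
        simp [mul_add]
      rw [h]; exact add_mem (ihv j) (ihw j)
    | smul c v hv ih =>
      intro j
      have hc : (c • v) j = (c : K) * v j := rfl
      have h : d * (c • v) j = (c : K) * (d * v j) := by rw [hc]; ring
      rw [h]; exact mul_mem c.2 (ih j)
  -- uniform coercivity constant
  obtain ⟨lam, hlam, hcoerc⟩ := exists_uniform_coercive hn hm f hhom hpos (RE σ₀)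
  set Hδ := house' δ with hHδdef
  set Hd := house' d with hHddef
  have hHδ0 : 0 ≤ Hδ := house'_nonneg δ
  set A : ℝ := (max 1 Hd) * Real.sqrt (max 1 (Hδ / lam)) with hAdef
  have hA1 : 1 ≤ A := by
    have h1 : (1 : ℝ) ≤ max 1 Hd := le_max_left _ _
    have h2 : (1 : ℝ) ≤ Real.sqrt (max 1 (Hδ / lam)) :=
      Real.one_le_sqrt.mpr (le_max_left _ _)
    rw [hAdef]; nlinarith
  -- KEY step
  have KEY : ∀ α : K, α ∈ O → (∀ σ : K →+* ℂ, 0 < (σ α).re) → 1 ≤ house' α →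
      ∃ β : Fin n → K,
        (∀ j, (β j ∈ O ∧ ∀ σ : K →+* ℂ, 0 < (σ (β j)).re) ∧
          house' (β j) ≤ 4 * A * Real.sqrt (house' α)) ∧
        ∀ F : IntermediateField ℚ K, δ ∈ F → d ∈ F →
          (∀ dd : Fin n →₀ ℕ, MvPolynomial.coeff dd f ∈ F) → (∀ j, β j ∈ F) → α ∈ F := by
    intro α hαO hαpos hα1
    obtain ⟨v, hvΛ, hvf⟩ := huniv α hαO hαpos
    have hH0 : (0 : ℝ) ≤ house' α := house'_nonneg α
    have hv_bound : ∀ (τ : K →+* ℝ) (j : Fin n),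
        |τ (v j)| ≤ Real.sqrt (max 1 (Hδ / lam)) * Real.sqrt (house' α) := by
      intro τ j
      have he : eval (fun j => τ (v j)) (map τ f) = τ δ * τ α := by
        have h0 : τ (eval v f) = eval (fun j => τ (v j)) (map τ f) := by
          rw [eval_map, ← MvPolynomial.eval₂_id (g := v) f,
            MvPolynomial.eval₂_comp_left τ (RingHom.id K) v f, RingHom.comp_id]
          rfl
        rw [← h0, hvf, map_mul]
      set Nr : ℝ := ‖fun j => τ (v j)‖ with hNrdef
      have hNr0 : 0 ≤ Nr := norm_nonneg _
      have h1 : lam * Nr ^ m ≤ Hδ * house' α := by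
        refine (hcoerc τ _).trans ?_
        rw [he]
        calc τ δ * τ α ≤ |τ δ * τ α| := le_abs_self _
          _ = |τ δ| * |τ α| := abs_mul _ _
          _ ≤ Hδ * house' α :=
            mul_le_mul (habs_le τ δ) (habs_le τ α) (abs_nonneg _) hHδ0
      have h2 : Nr ^ m ≤ (Hδ * house' α) / lam := by
        rw [le_div_iff₀ hlam]
        nlinarith
      have h3 : Nr ^ 2 ≤ max 1 ((Hδ * house' α) / lam) := by
        rcases le_total Nr 1 with h | h
        · exact le_trans (pow_le_one₀ hNr0 h) (le_max_left _ _)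
        · exact le_trans (le_trans (pow_le_pow_right₀ h hm) h2) (le_max_right _ _)
      have h4 : Nr ≤ Real.sqrt (max 1 ((Hδ * house' α) / lam)) := by
        rw [show Nr = Real.sqrt (Nr ^ 2) by rw [Real.sqrt_sq hNr0]]
        exact Real.sqrt_le_sqrt h3
      have h5 : max 1 ((Hδ * house' α) / lam) ≤ (max 1 (Hδ / lam)) * house' α := by
        apply max_le
        · have h6 : (1 : ℝ) ≤ max 1 (Hδ / lam) := le_max_left _ _
          nlinarith
        · have h6 : (Hδ * house' α) / lam = (Hδ / lam) * house' α := by ring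
          rw [h6]
          exact mul_le_mul_of_nonneg_right (le_max_right _ _) hH0
      have h6 : Real.sqrt ((max 1 (Hδ / lam)) * house' α)
          = Real.sqrt (max 1 (Hδ / lam)) * Real.sqrt (house' α) :=
        Real.sqrt_mul (le_trans zero_le_one (le_max_left _ _)) _
      have h7 : |τ (v j)| ≤ Nr := by
        have h8 : ‖(fun j => τ (v j)) j‖ ≤ Nr := norm_le_pi_norm (fun j => τ (v j)) j
        simpa [Real.norm_eq_abs] using h8
      exact h7.trans (h4.trans ((Real.sqrt_le_sqrt h5).trans (le_of_eq h6)))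
    have hv_cbound : ∀ (σ : K →+* ℂ) (j : Fin n),
        ‖σ (v j)‖ ≤ Real.sqrt (max 1 (Hδ / lam)) * Real.sqrt (house' α) := by
      intro σ j
      rw [hREabs]
      exact hv_bound (RE σ) j
    set u : Fin n → K := fun j => d * v j with hudef
    have huO : ∀ j, u j ∈ O := fun j => hdΛ v hvΛ j
    have hu_house : ∀ j, house' (u j) ≤ A * Real.sqrt (house' α) := by
      intro j
      apply house'_le
      intro σ
      have h1 : ‖σ (u j)‖ = ‖σ d‖ * ‖σ (v j)‖ := by
        rw [hudef]
        simp [map_mul]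
      rw [h1]
      calc ‖σ d‖ * ‖σ (v j)‖
          ≤ (max 1 Hd) * (Real.sqrt (max 1 (Hδ / lam)) * Real.sqrt (house' α)) :=
            mul_le_mul (le_trans (le_house' σ d) (le_max_right _ _)) (hv_cbound σ j)
              (norm_nonneg _) (le_trans zero_le_one (le_max_left _ _))
        _ = A * Real.sqrt (house' α) := by rw [hAdef]; ring
    set t : Fin n → ℕ := fun j => ⌈house' (u j)⌉₊ + 1 with htdef
    have htgt : ∀ j, house' (u j) < t j := by
      intro j
      rw [htdef]
      push_cast
      have := Nat.le_ceil (house' (u j))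
      linarith
    have htle : ∀ j, (t j : ℝ) ≤ house' (u j) + 2 := by
      intro j
      rw [htdef]
      push_cast
      have := Nat.ceil_lt_add_one (house'_nonneg (u j))
      linarith
    set β : Fin n → K := fun j => u j + (t j : K) with hβdef
    have hβO : ∀ j, β j ∈ O := fun j => add_mem (huO j) (Subalgebra.natCast_mem O (t j))
    have hβpos : ∀ j, ∀ σ : K →+* ℂ, 0 < (σ (β j)).re := by
      intro j σ
      have h1 : σ (β j) = σ (u j) + (t j : ℂ) := by rw [hβdef]; push_cast [map_add]; norm_num
      rw [h1, Complex.add_re, Complex.natCast_re]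
      have h2 : |(σ (u j)).re| ≤ house' (u j) :=
        le_trans (Complex.abs_re_le_norm _) (le_house' σ (u j))
      have h3 := (abs_le.mp h2).1
      have h4 := htgt j
      linarith
    have hβhouse : ∀ j, house' (β j) ≤ 4 * A * Real.sqrt (house' α) := by
      intro j
      have hAs1 : 1 ≤ A * Real.sqrt (house' α) := by
        have h1 : 1 ≤ Real.sqrt (house' α) := Real.one_le_sqrt.mpr hα1
        nlinarith
      apply house'_le
      intro σ
      have h1 : σ (β j) = σ (u j) + (t j : ℂ) := by rw [hβdef]; push_cast [map_add]; norm_num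
      rw [h1]
      calc ‖σ (u j) + (t j : ℂ)‖
          ≤ ‖σ (u j)‖ + ‖(t j : ℂ)‖ := norm_add_le _ _
        _ ≤ house' (u j) + (t j : ℝ) := by
            rw [Complex.norm_natCast]
            exact add_le_add (le_house' σ (u j)) le_rfl
        _ ≤ 2 * house' (u j) + 2 := by
            have := htle j
            linarith
        _ ≤ 4 * A * Real.sqrt (house' α) := by
            have := hu_house j
            nlinarith
    refine ⟨β, fun j => ⟨⟨hβO j, hβpos j⟩, hβhouse j⟩, ?_⟩
    intro F hδF hdF hcF hβF
    have hvF : ∀ j, v j ∈ F := by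
      intro j
      have h1 : β j - (t j : K) = d * v j := by rw [hβdef]; simp [hudef]
      have h2 : v j = (β j - (t j : K)) * d⁻¹ := by
        rw [h1]
        field_simp
      rw [h2]
      exact mul_mem (sub_mem (hβF j) (IntermediateField.natCast_mem F (t j))) (inv_mem hdF)
    have hevalF : eval v f ∈ F := by
      rw [MvPolynomial.eval_eq]
      exact sum_mem fun dd _ => mul_mem (hcF dd) (prod_mem fun i _ => pow_mem (hvF i) _)
    have hαval : α = eval v f * δ⁻¹ := by
      rw [hvf]
      field_simp
    rw [hαval]
    exact mul_mem hevalF (inv_mem hδF)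
  -- the finite-degree trap field
  set c₀ : ℝ := 64 * A ^ 2 + 2 with hc₀def
  have hTfin : {α : K | α ∈ {x : K | x ∈ O ∧ ∀ σ : K →+* ℂ, 0 < (σ x).re}
      ∧ house' α < c₀ + 1}.Finite := hNor (c₀ + 1) (by positivity)
  set T : Set K := {α : K | α ∈ {x : K | x ∈ O ∧ ∀ σ : K →+* ℂ, 0 < (σ x).re}
      ∧ house' α < c₀ + 1} with hTdef
  set S₀ : Set K := ((fun dd : Fin n →₀ ℕ => MvPolynomial.coeff dd f) '' ↑f.support
      ∪ {δ, d}) ∪ T with hS₀def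
  have hS₀fin : S₀.Finite :=
    ((f.support.finite_toSet.image _).union ((Set.finite_singleton d).insert δ)).union
      hTfin
  haveI : Finite ↥S₀ := hS₀fin
  set E := IntermediateField.adjoin ℚ S₀ with hEdef
  haveI hEfd : FiniteDimensional ℚ E :=
    IntermediateField.finiteDimensional_adjoin
      (fun x _ => (Algebra.IsAlgebraic.isAlgebraic x).isIntegral)
  have hδE : δ ∈ E := IntermediateField.subset_adjoin _ _
    (Or.inl (Or.inr (Set.mem_insert _ _)))
  have hdE : d ∈ E := IntermediateField.subset_adjoin _ _
    (Or.inl (Or.inr (Set.mem_insert_of_mem _ rfl)))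
  have hcoefE : ∀ dd : Fin n →₀ ℕ, MvPolynomial.coeff dd f ∈ E := by
    intro dd
    by_cases h : dd ∈ f.support
    · exact IntermediateField.subset_adjoin _ _ (Or.inl (Or.inl ⟨dd, h, rfl⟩))
    · rw [MvPolynomial.notMem_support_iff.mp h]
      exact zero_mem E
  -- main induction on the ceiling of the house
  have main : ∀ N : ℕ, ∀ α : K, α ∈ O → (∀ σ : K →+* ℂ, 0 < (σ α).re) →
      house' α ≤ (N : ℝ) → α ∈ E := by
    intro N
    induction N using Nat.strong_induction_on with
    | _ N ih =>
      intro α hαO hαpos hαN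
      by_cases hsmall : house' α < c₀ + 1
      · exact IntermediateField.subset_adjoin _ _ (Or.inr ⟨⟨hαO, hαpos⟩, hsmall⟩)
      push_neg at hsmall
      rw [hc₀def] at hsmall
      have hα1 : 1 ≤ house' α := by nlinarith
      obtain ⟨β, hβ, hmem⟩ := KEY α hαO hαpos hα1
      have hH0 := house'_nonneg α
      have h8A : 8 * A ≤ Real.sqrt (house' α) := by
        have h1 : (8 * A) ^ 2 ≤ house' α := by nlinarith
        calc 8 * A = Real.sqrt ((8 * A) ^ 2) := (Real.sqrt_sq (by linarith)).symm
          _ ≤ _ := Real.sqrt_le_sqrt h1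
      have hstep : 4 * A * Real.sqrt (house' α) ≤ house' α / 2 := by
        have hs0 : 0 ≤ Real.sqrt (house' α) := Real.sqrt_nonneg _
        nlinarith [Real.sq_sqrt hH0]
      have hN1 : 1 ≤ N := by
        by_contra h
        push_neg at h
        have h0 : N = 0 := by omega
        rw [h0] at hαN
        simp at hαN
        nlinarith
      have hβE : ∀ j, β j ∈ E := by
        intro j
        refine ih (N - 1) (by omega) (β j) (hβ j).1.1 (hβ j).1.2 ?_
        have h1 : house' (β j) ≤ house' α / 2 := le_trans (hβ j).2 hstep
        have h2 : ((N - 1 : ℕ) : ℝ) = (N : ℝ) - 1 := by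
          push_cast [Nat.cast_sub hN1]
          ring
        rw [h2]
        nlinarith
      exact hmem E hδE hdE hcoefE hβE
  -- every element of O is in E
  have hOE : ∀ a, a ∈ O → a ∈ E := by
    intro a ha
    set ta : ℕ := ⌈house' a⌉₊ + 1 with htadef
    have hta : house' a < ta := by
      rw [htadef]
      push_cast
      have := Nat.le_ceil (house' a)
      linarith
    have h1 : a + (ta : K) ∈ O := add_mem ha (Subalgebra.natCast_mem O ta)
    have h2 : ∀ σ : K →+* ℂ, 0 < (σ (a + (ta : K))).re := by
      intro σ
      rw [map_add, map_natCast, Complex.add_re, Complex.natCast_re]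
      have h3 : |(σ a).re| ≤ house' a :=
        le_trans (Complex.abs_re_le_norm _) (le_house' σ a)
      have h4 := (abs_le.mp h3).1
      linarith
    have h3 : a + (ta : K) ∈ E := main ⌈house' (a + (ta : K))⌉₊ _ h1 h2 (Nat.le_ceil _)
    have h4 : a = (a + (ta : K)) - (ta : K) := by ring
    rw [h4]
    exact sub_mem h3 (IntermediateField.natCast_mem E ta)
  have hKE : ∀ x : K, x ∈ E := by
    intro x
    obtain ⟨a, ha, b, hb, hb0, rfl⟩ := hOfrac x
    exact div_mem (hOE a ha) (hOE b hb)
  apply hKinf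
  have hEtop : E = ⊤ := eq_top_iff.mpr fun x _ => hKE x
  rw [hEtop] at hEfd
  exact (IntermediateField.topEquiv (F := ℚ) (E := K)).toLinearEquiv.finiteDimensional
end
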